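/- There exists N₁ such that for every integer N ≥ N₁, one has L_k(p) ⊆ I_N(c₀); that is, the weight-p part of the filtration is contained in the ideal generated by the elements ℱ⁰_{γ,−N} with γ ≥ c₀. (Proposition 4.3: 𝓛(p) ⊆ 𝓛^{(c₀)}.) -/

import Mathlib

namespace AbrLie

variable (p N₀ : ℕ) [Fact p.Prime] (k : Type*) [Field k]

/-- Indexing set of the free generators `D_{a,n}` (`a ∈ ℤ⁺(p)`, `n ∈ ℤ/N₀`) and `D₀`. -/
abbrev Idx : Type := ({a : ℕ // 0 < a ∧ Nat.Coprime a p} × ZMod N₀) ⊕ Unit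

/-- The free Lie `k`-algebra on the generators. -/
abbrev Lfree : Type _ := FreeLieAlgebra k (Idx p N₀)

/-- `L_k`: the quotient of the free Lie algebra by the ideal of commutators of order `≥ p`,
i.e. by the `p`-th term `C_p` of the lower central series (Mathlib's
`lowerCentralSeries … (p-1)`). -/
abbrev Lq : Type _ :=
  Lfree p N₀ k ⧸ LieModule.lowerCentralSeries k (Lfree p N₀ k) (Lfree p N₀ k) (p - 1)

/-- The generator `D_{a,n}` in `L_k`. -/
noncomputable def DD (a : {a : ℕ // 0 < a ∧ Nat.Coprime a p}) (n : ZMod N₀) : Lq p N₀ k :=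
  LieSubmodule.Quotient.mk' _ (FreeLieAlgebra.of k (Sum.inl (a, n)))

/-- The generator `D₀` in `L_k`. -/
noncomputable def D0 : Lq p N₀ k :=
  LieSubmodule.Quotient.mk' _ (FreeLieAlgebra.of k (Sum.inr ()))

/-- `D_{a,n}` for `a ∈ ℤ⁰(p)`: the generator for `a ∈ ℤ⁺(p)`, and `α₀^{p^n}·D₀` for `a = 0`. -/
noncomputable def Dfun (α₀ : k) (a : ℕ) (n : ZMod N₀) : Lq p N₀ k :=
  if h : 0 < a ∧ Nat.Coprime a p then DD p N₀ k ⟨a, h⟩ n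
  else if a = 0 then α₀ ^ p ^ n.val • D0 p N₀ k
  else 0

/-- The left-normed iterated bracket `[…[[x₁,x₂],x₃],…,x_s]` of a list. -/
def lieFold {L : Type*} [LieRing L] : List L → L
  | [] => 0
  | x :: xs => xs.foldl (fun a b => ⁅a, b⁆) x

/-- The coefficient `η(n₁,…,n_s) = (s₁!·(s₂−s₁)!⋯(s_r−s_{r−1})!)^{−1}` attached to a weakly
decreasing sequence, encoded as the inverse of the product over `i` of the number of indices
`j ≤ i` with `n_j = n_i`. -/
noncomputable def eta {s : ℕ} (n : Fin s → ℤ) : k :=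
  (∏ i : Fin s, (((Finset.univ.filter fun j : Fin s => n j = n i ∧ j ≤ i).card : ℕ) : k))⁻¹

/-- The element `ℱ⁰_{γ,−N} ∈ L_k`: the sum of
`a₁·η(n₁,…,n_s)·[…[[D_{a₁,n̄₁},D_{a₂,n̄₂}],…],D_{a_s,n̄_s}]` over `1 ≤ s < p`,
`a_i ∈ ℤ⁰(p)`, `0 = n₁ ≥ n₂ ≥ ⋯ ≥ n_s ≥ −N` with `Σ a_i p^{n_i} = γ`. -/
noncomputable def Fcal (α₀ : k) (γ : ℚ) (N : ℕ) : Lq p N₀ k :=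
  ∑ᶠ x : Σ s : ℕ, (Fin s → ℕ) × (Fin s → ℤ),
    if hs : 1 ≤ x.1 ∧ x.1 < p then
      if (∀ i, p ∣ x.2.1 i → x.2.1 i = 0) ∧
          x.2.2 ⟨0, hs.1⟩ = 0 ∧
          (∀ i j : Fin x.1, i ≤ j → x.2.2 j ≤ x.2.2 i) ∧
          (∀ i, -(N : ℤ) ≤ x.2.2 i) ∧
          (∑ i, (x.2.1 i : ℚ) * (p : ℚ) ^ x.2.2 i) = γ then
        (((x.2.1 ⟨0, hs.1⟩ : ℕ) : k) * eta k x.2.2) •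
          lieFold (List.ofFn fun i => Dfun p N₀ k α₀ (x.2.1 i) ((x.2.2 i : ℤ) : ZMod N₀))
      else 0
    else 0

/-- The weight of a generator `D_{a,n}`: the unique `s` with `(s−1)c₀ ≤ a < s·c₀`
(with `wt D₀ = 1`, corresponding to `a = 0`). -/
def wtD (c₀ a : ℕ) : ℕ := a / c₀ + 1

/-- `IsMon x w`: `x` is an iterated bracket monomial in the generators, of total weight `w`. -/
inductive IsMon (c₀ : ℕ) : Lq p N₀ k → ℕ → Prop
  | gen (a : {a : ℕ // 0 < a ∧ Nat.Coprime a p}) (n : ZMod N₀) :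
      IsMon c₀ (DD p N₀ k a n) (wtD c₀ a)
  | zero : IsMon c₀ (D0 p N₀ k) 1
  | brkt {x y : Lq p N₀ k} {w₁ w₂ : ℕ} :
      IsMon c₀ x w₁ → IsMon c₀ y w₂ → IsMon c₀ ⁅x, y⁆ (w₁ + w₂)

/-- `L_k(s)`: the `k`-span of all iterated bracket monomials in the generators whose weights
sum to at least `s`. -/
noncomputable def Lk (c₀ s : ℕ) : Submodule k (Lq p N₀ k) :=
  Submodule.span k {x : Lq p N₀ k | ∃ w : ℕ, s ≤ w ∧ IsMon p N₀ k c₀ x w}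

/-- `I_N(c₀)`: the smallest `σ`-invariant Lie ideal of `L_k` containing all `ℱ⁰_{γ,−N}` with
`γ ≥ c₀`. -/
noncomputable def ramIdeal (σ : Lq p N₀ k → Lq p N₀ k) (α₀ : k) (c₀ N : ℕ) :
    LieIdeal k (Lq p N₀ k) :=
  sInf {I : LieIdeal k (Lq p N₀ k) |
    (∀ x ∈ I, σ x ∈ I) ∧ ∀ γ : ℚ, (c₀ : ℚ) ≤ γ → Fcal p N₀ k α₀ γ N ∈ I}


section Aux

variable {p N₀ : ℕ} [Fact p.Prime] {k : Type*} [Field k]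

set_option linter.unusedSectionVars false

lemma lq_lie_zero (x : Lq p N₀ k) : ⁅x, (0 : Lq p N₀ k)⁆ = 0 := lie_zero x
lemma lq_zero_lie (x : Lq p N₀ k) : ⁅(0 : Lq p N₀ k), x⁆ = 0 := zero_lie x
lemma lq_lie_add (x u v : Lq p N₀ k) : ⁅x, u + v⁆ = ⁅x, u⁆ + ⁅x, v⁆ := lie_add x u v
lemma lq_add_lie (x u v : Lq p N₀ k) : ⁅u + v, x⁆ = ⁅u, x⁆ + ⁅v, x⁆ := add_lie u v x
lemma lq_lie_smul (c : k) (x u : Lq p N₀ k) : ⁅x, c • u⁆ = c • ⁅x, u⁆ := lie_smul c x u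
lemma lq_smul_lie (c : k) (x u : Lq p N₀ k) : ⁅c • u, x⁆ = c • ⁅u, x⁆ := smul_lie c u x
lemma lq_lie_skew (x y : Lq p N₀ k) : ⁅x, y⁆ = -⁅y, x⁆ := (lie_skew x y).symm

/-- Monomials with weight and length. -/
inductive IsMonL (c₀ : ℕ) : Lq p N₀ k → ℕ → ℕ → Prop
  | gen (a : {a : ℕ // 0 < a ∧ Nat.Coprime a p}) (n : ZMod N₀) :
      IsMonL c₀ (DD p N₀ k a n) (wtD c₀ a) 1
  | zero : IsMonL c₀ (D0 p N₀ k) 1 1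
  | brkt {x y : Lq p N₀ k} {w₁ w₂ ℓ₁ ℓ₂ : ℕ} :
      IsMonL c₀ x w₁ ℓ₁ → IsMonL c₀ y w₂ ℓ₂ → IsMonL c₀ ⁅x, y⁆ (w₁ + w₂) (ℓ₁ + ℓ₂)

lemma isMonL_le (c₀ : ℕ) {x : Lq p N₀ k} {w ℓ : ℕ} (h : IsMonL c₀ x w ℓ) :
    1 ≤ ℓ ∧ ℓ ≤ w := by
  induction h with
  | gen a n => exact ⟨le_refl 1, by simp [wtD]⟩
  | zero => exact ⟨le_refl 1, le_refl 1⟩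
  | brkt hx hy ihx ihy => omega

lemma isMon_isMonL (c₀ : ℕ) {x : Lq p N₀ k} {w : ℕ} (h : IsMon p N₀ k c₀ x w) :
    ∃ ℓ, IsMonL c₀ x w ℓ := by
  induction h with
  | gen a n => exact ⟨1, IsMonL.gen a n⟩
  | zero => exact ⟨1, IsMonL.zero⟩
  | brkt hx hy ihx ihy =>
    obtain ⟨ℓ₁, h₁⟩ := ihx; obtain ⟨ℓ₂, h₂⟩ := ihy
    exact ⟨ℓ₁ + ℓ₂, h₁.brkt h₂⟩

/-- Span of monomials of weight `≥ w₀` and length `≥ ℓ₀`. -/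
noncomputable def SpanMon (c₀ w₀ ℓ₀ : ℕ) : Submodule k (Lq p N₀ k) :=
  Submodule.span k {x : Lq p N₀ k | ∃ w ℓ, w₀ ≤ w ∧ ℓ₀ ≤ ℓ ∧ IsMonL c₀ x w ℓ}

lemma spanMon_mono {c₀ w₀ ℓ₀ w₀' ℓ₀' : ℕ} (hw : w₀' ≤ w₀) (hℓ : ℓ₀' ≤ ℓ₀) :
    (SpanMon c₀ w₀ ℓ₀ : Submodule k (Lq p N₀ k)) ≤ SpanMon c₀ w₀' ℓ₀' := by
  apply Submodule.span_mono
  rintro x ⟨w, ℓ, h1, h2, h3⟩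
  exact ⟨w, ℓ, le_trans hw h1, le_trans hℓ h2, h3⟩

lemma mem_spanMon_of_isMonL {c₀ w₀ ℓ₀ : ℕ} {x : Lq p N₀ k} {w ℓ : ℕ}
    (h : IsMonL c₀ x w ℓ) (hw : w₀ ≤ w) (hℓ : ℓ₀ ≤ ℓ) :
    x ∈ (SpanMon c₀ w₀ ℓ₀ : Submodule k (Lq p N₀ k)) :=
  Submodule.subset_span ⟨w, ℓ, hw, hℓ, h⟩

lemma lie_spanMon {c₀ w₁ ℓ₁ w₂ ℓ₂ : ℕ} {x y : Lq p N₀ k}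
    (hx : x ∈ (SpanMon c₀ w₁ ℓ₁ : Submodule k (Lq p N₀ k)))
    (hy : y ∈ (SpanMon c₀ w₂ ℓ₂ : Submodule k (Lq p N₀ k))) :
    ⁅x, y⁆ ∈ (SpanMon c₀ (w₁ + w₂) (ℓ₁ + ℓ₂) : Submodule k (Lq p N₀ k)) := by
  induction hx using Submodule.span_induction with
  | mem x hxm =>
    obtain ⟨w, ℓ, hw, hℓ, hmon⟩ := hxm
    induction hy using Submodule.span_induction with
    | mem y hym =>
      obtain ⟨w', ℓ', hw', hℓ', hmon'⟩ := hym
      exact mem_spanMon_of_isMonL (hmon.brkt hmon') (by omega) (by omega)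
    | zero => rw [lq_lie_zero]; exact zero_mem _
    | add u v _ _ hu hv => rw [lq_lie_add]; exact add_mem hu hv
    | smul c u _ hu => rw [lq_lie_smul]; exact Submodule.smul_mem _ c hu
  | zero => rw [lq_zero_lie]; exact zero_mem _
  | add u v _ _ hu hv => rw [lq_add_lie]; exact add_mem hu hv
  | smul c u _ hu => rw [lq_smul_lie]; exact Submodule.smul_mem _ c hu

/-- the quotient map as a Lie algebra hom -/
noncomputable def mkLie : Lfree p N₀ k →ₗ⁅k⁆ Lq p N₀ k :=
  { LieSubmodule.Quotient.mk'
      (LieModule.lowerCentralSeries k (Lfree p N₀ k) (Lfree p N₀ k) (p - 1)) with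
    map_lie' := rfl }

lemma mkLie_surj : Function.Surjective (mkLie (p := p) (N₀ := N₀) (k := k)) :=
  Quot.mk_surjective

lemma lie_mem_lcs {R L : Type*} [CommRing R] [LieRing L] [LieAlgebra R L] :
    ∀ (n m : ℕ) (x y : L), x ∈ LieModule.lowerCentralSeries R L L m →
      y ∈ LieModule.lowerCentralSeries R L L n →
      ⁅x, y⁆ ∈ LieModule.lowerCentralSeries R L L (m + n + 1) := by
  intro n
  induction n with
  | zero =>
    intro m x y hx _
    rw [← lie_skew, LieModule.lowerCentralSeries_succ]
    exact neg_mem (LieSubmodule.lie_mem_lie (LieSubmodule.mem_top y) hx)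
  | succ n ih =>
    intro m x y hx hy
    rw [LieModule.lowerCentralSeries_succ] at hy
    rw [← LieSubmodule.mem_toSubmodule, LieSubmodule.lieIdeal_oper_eq_linear_span'] at hy
    induction hy using Submodule.span_induction with
    | mem w hw =>
      obtain ⟨z, -, w', hw', rfl⟩ := hw
      rw [leibniz_lie]
      apply add_mem
      · have h1 : ⁅x, z⁆ ∈ LieModule.lowerCentralSeries R L L (m + 1) := by
          rw [← lie_skew, LieModule.lowerCentralSeries_succ]
          exact neg_mem (LieSubmodule.lie_mem_lie (LieSubmodule.mem_top z) hx)
        have h := ih (m + 1) _ _ h1 hw'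
        convert h using 2
        omega
      · have h2 := ih m _ _ hx hw'
        have h : ⁅z, ⁅x, w'⁆⁆ ∈ LieModule.lowerCentralSeries R L L (m + n + 1 + 1) := by
          rw [LieModule.lowerCentralSeries_succ]
          exact LieSubmodule.lie_mem_lie (LieSubmodule.mem_top z) h2
        convert h using 2
        omega
    | zero => simp
    | add u v _ _ hu hv => rw [lie_add]; exact add_mem hu hv
    | smul c u _ hu => rw [lie_smul]; exact Submodule.smul_mem _ c hu

lemma isMonL_mem_lcs {c₀ : ℕ} {x : Lq p N₀ k} {w ℓ : ℕ} (h : IsMonL c₀ x w ℓ) :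
    x ∈ LieModule.lowerCentralSeries k (Lq p N₀ k) (Lq p N₀ k) (ℓ - 1) := by
  induction h with
  | gen a n => simp
  | zero => simp
  | brkt hx hy ihx ihy =>
    rename_i x y w₁ w₂ ℓ₁ ℓ₂
    have h1 := (isMonL_le _ hx).1
    have h2 := (isMonL_le _ hy).1
    have key := lie_mem_lcs (ℓ₂ - 1) (ℓ₁ - 1) _ _ ihx ihy
    have he : ℓ₁ - 1 + (ℓ₂ - 1) + 1 = ℓ₁ + ℓ₂ - 1 := by omega
    rw [he] at key
    exact key

lemma lcs_quot_eq_bot :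
    LieModule.lowerCentralSeries k (Lq p N₀ k) (Lq p N₀ k) (p - 1) = ⊥ := by
  rw [← LieIdeal.lowerCentralSeries_map_eq (p - 1)
    (mkLie_surj (p := p) (N₀ := N₀) (k := k))]
  rw [LieIdeal.map_eq_bot_iff]
  intro x hx
  rw [LieHom.mem_ker]
  exact (LieSubmodule.Quotient.mk_eq_zero _).2 hx

lemma isMonL_zero_of_long {c₀ : ℕ} {x : Lq p N₀ k} {w ℓ : ℕ}
    (h : IsMonL c₀ x w ℓ) (hℓ : p ≤ ℓ) : x = 0 := by
  have h1 := isMonL_mem_lcs h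
  have h2 : LieModule.lowerCentralSeries k (Lq p N₀ k) (Lq p N₀ k) (ℓ - 1) ≤
      LieModule.lowerCentralSeries k (Lq p N₀ k) (Lq p N₀ k) (p - 1) := by
    exact LieModule.antitone_lowerCentralSeries k (Lq p N₀ k) (Lq p N₀ k) (by omega)
  have := h2 h1
  rw [lcs_quot_eq_bot] at this
  simpa using this

section Sigma

variable {σ : Lq p N₀ k → Lq p N₀ k}
  (hσadd : ∀ x y : Lq p N₀ k, σ (x + y) = σ x + σ y)
  (hσsmul : ∀ (c : k) (x : Lq p N₀ k), σ (c • x) = c ^ p • σ x)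
  (hσbrkt : ∀ x y : Lq p N₀ k, σ ⁅x, y⁆ = ⁅σ x, σ y⁆)
  (hσD : ∀ a n, σ (DD p N₀ k a n) = DD p N₀ k a (n + 1))
  (hσ0 : σ (D0 p N₀ k) = D0 p N₀ k)

include hσsmul in
lemma sigma_zero : σ 0 = 0 := by
  have := hσsmul 0 0
  simpa [zero_pow (Nat.Prime.ne_zero (Fact.out : p.Prime))] using this

include hσbrkt hσD hσ0 in
lemma sigma_isMonL {c₀ : ℕ} {x : Lq p N₀ k} {w ℓ : ℕ} (h : IsMonL c₀ x w ℓ) :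
    IsMonL c₀ (σ x) w ℓ := by
  induction h with
  | gen a n => rw [hσD]; exact IsMonL.gen a (n + 1)
  | zero => rw [hσ0]; exact IsMonL.zero
  | brkt hx hy ihx ihy => rw [hσbrkt]; exact ihx.brkt ihy

include hσadd hσsmul hσbrkt hσD hσ0 in
lemma sigma_spanMon {c₀ w₀ ℓ₀ : ℕ} {x : Lq p N₀ k}
    (h : x ∈ (SpanMon c₀ w₀ ℓ₀ : Submodule k (Lq p N₀ k))) :
    σ x ∈ (SpanMon c₀ w₀ ℓ₀ : Submodule k (Lq p N₀ k)) := by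
  induction h using Submodule.span_induction with
  | mem x hxm =>
    obtain ⟨w, ℓ, hw, hℓ, hmon⟩ := hxm
    exact mem_spanMon_of_isMonL (sigma_isMonL hσbrkt hσD hσ0 hmon) hw hℓ
  | zero => rw [sigma_zero hσsmul]; exact zero_mem _
  | add u v _ _ hu hv => rw [hσadd]; exact add_mem hu hv
  | smul c u _ hu => rw [hσsmul]; exact Submodule.smul_mem _ _ hu

end Sigma

lemma mem_ramIdeal_iff {σ : Lq p N₀ k → Lq p N₀ k} {α₀ : k} {c₀ N : ℕ} {x : Lq p N₀ k} :
    x ∈ ramIdeal p N₀ k σ α₀ c₀ N ↔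
      ∀ I : LieIdeal k (Lq p N₀ k),
        ((∀ y ∈ I, σ y ∈ I) ∧ ∀ γ : ℚ, (c₀ : ℚ) ≤ γ → Fcal p N₀ k α₀ γ N ∈ I) → x ∈ I := by
  rw [ramIdeal, ← LieSubmodule.mem_coe, LieSubmodule.coe_sInf]
  simp

lemma fcal_mem_ramIdeal {σ : Lq p N₀ k → Lq p N₀ k} {α₀ : k} {c₀ N : ℕ} {γ : ℚ}
    (hγ : (c₀ : ℚ) ≤ γ) : Fcal p N₀ k α₀ γ N ∈ ramIdeal p N₀ k σ α₀ c₀ N := by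
  rw [mem_ramIdeal_iff]
  exact fun I hI => hI.2 γ hγ

lemma sigma_mem_ramIdeal {σ : Lq p N₀ k → Lq p N₀ k} {α₀ : k} {c₀ N : ℕ} {x : Lq p N₀ k}
    (hx : x ∈ ramIdeal p N₀ k σ α₀ c₀ N) : σ x ∈ ramIdeal p N₀ k σ α₀ c₀ N := by
  rw [mem_ramIdeal_iff] at hx ⊢
  exact fun I hI => hI.1 x (hx I hI)

/-- arithmetic: subadditivity of weights -/
lemma wtD_sum_le {c₀ : ℕ} (hc₀ : 0 < c₀) {s : ℕ} (hs : 1 ≤ s) (b : Fin s → ℕ) {a : ℕ}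
    (ha : a ≤ ∑ i, b i) : wtD c₀ a ≤ ∑ i, wtD c₀ (b i) := by
  have key : ∀ (s : ℕ) (b : Fin s → ℕ), 1 ≤ s →
      (∑ i, b i) / c₀ + 1 ≤ ∑ i, (b i / c₀ + 1) := by
    intro s
    induction s with
    | zero => omega
    | succ m ih =>
      intro b _
      rcases Nat.eq_zero_or_pos m with hm | hm
      · subst hm; simp
      · rw [Fin.sum_univ_succ, Fin.sum_univ_succ]
        have h1 : (∑ i : Fin m, b i.succ) / c₀ + 1 ≤ ∑ i : Fin m, (b i.succ / c₀ + 1) :=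
          ih (fun i => b i.succ) hm
        have h2 : (b 0 + ∑ i : Fin m, b i.succ) / c₀ ≤
            b 0 / c₀ + (∑ i : Fin m, b i.succ) / c₀ + 1 := by
          have hx := Nat.div_add_mod (b 0) c₀
          have hy := Nat.div_add_mod (∑ i : Fin m, b i.succ) c₀
          have hxm := Nat.mod_lt (b 0) hc₀
          have hym := Nat.mod_lt (∑ i : Fin m, b i.succ) hc₀
          have hlt : b 0 + ∑ i : Fin m, b i.succ <
              (b 0 / c₀ + (∑ i : Fin m, b i.succ) / c₀ + 2) * c₀ := by nlinarith
          have := (Nat.div_lt_iff_lt_mul hc₀).2 hlt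
          omega
        omega
  have h0 : a / c₀ ≤ (∑ i, b i) / c₀ := Nat.div_le_div_right ha
  have := key s b hs
  simp only [wtD]
  omega

lemma natCast_pow_p [CharP k p] (a : ℕ) : ((a : k)) ^ p = (a : k) := by
  haveI : ExpChar k p := ExpChar.prime Fact.out
  have h := map_natCast (frobenius k p) a
  rwa [frobenius_def] at h

lemma not_dvd_of_coprime {a : ℕ} (ha : 0 < a) (hap : Nat.Coprime a p) : ¬ p ∣ a :=
  (Nat.Prime.coprime_iff_not_dvd (Fact.out : p.Prime)).mp hap.symm

lemma dfun_mem_spanMon {c₀ : ℕ} (α₀ : k) (b : ℕ) (hb : p ∣ b → b = 0) (n : ZMod N₀) :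
    Dfun p N₀ k α₀ b n ∈ (SpanMon c₀ (wtD c₀ b) 1 : Submodule k (Lq p N₀ k)) := by
  rcases Nat.eq_zero_or_pos b with h0 | hpos
  · subst h0
    rw [Dfun, dif_neg (by simp), if_pos rfl]
    exact Submodule.smul_mem _ _
      (mem_spanMon_of_isMonL IsMonL.zero (by simp [wtD]) le_rfl)
  · have hnd : ¬ p ∣ b := fun hd => by omega
    have hcop : Nat.Coprime b p :=
      Nat.Coprime.symm ((Nat.Prime.coprime_iff_not_dvd (Fact.out : p.Prime)).mpr hnd)
    rw [Dfun, dif_pos ⟨hpos, hcop⟩]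
    exact mem_spanMon_of_isMonL (IsMonL.gen ⟨b, hpos, hcop⟩ n) le_rfl le_rfl

lemma foldl_spanMon {c₀ : ℕ} :
    ∀ {l : List (Lq p N₀ k)} {ws : List ℕ},
      List.Forall₂ (fun y w => y ∈ (SpanMon c₀ w 1 : Submodule k (Lq p N₀ k))) l ws →
      ∀ (x : Lq p N₀ k) (W L : ℕ), x ∈ (SpanMon c₀ W L : Submodule k (Lq p N₀ k)) →
      List.foldl (fun u v => ⁅u, v⁆) x l ∈
        (SpanMon c₀ (W + ws.sum) (L + l.length) : Submodule k (Lq p N₀ k)) := by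
  intro l ws h
  induction h with
  | nil => intro x W L hx; simpa using hx
  | @cons y w l' ws' hy hrest ih =>
    intro x W L hx
    have hb := lie_spanMon hx hy
    have hres := ih _ _ _ hb
    simp only [List.foldl_cons, List.length_cons, List.sum_cons]
    have e1 : W + (w + List.sum ws') = W + w + List.sum ws' := by omega
    have e2 : L + (l'.length + 1) = L + L.succ - L + l'.length := by omega
    rw [e1]
    have e3 : L + (l'.length + 1) = (L + 1) + l'.length := by omega
    rw [e3]
    exact hres

lemma lieFold_ofFn_mem {c₀ : ℕ} {s : ℕ} (hs : 1 ≤ s) (g : Fin s → Lq p N₀ k)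
    (wv : Fin s → ℕ)
    (hg : ∀ i, g i ∈ (SpanMon c₀ (wv i) 1 : Submodule k (Lq p N₀ k))) :
    lieFold (List.ofFn g) ∈ (SpanMon c₀ (∑ i, wv i) s : Submodule k (Lq p N₀ k)) := by
  obtain ⟨m, rfl⟩ : ∃ m, s = m + 1 := ⟨s - 1, by omega⟩
  rw [List.ofFn_succ]
  show List.foldl (fun u v => ⁅u, v⁆) (g 0) (List.ofFn fun i : Fin m => g i.succ) ∈ _
  have hfa : List.Forall₂ (fun y w => y ∈ (SpanMon c₀ w 1 : Submodule k (Lq p N₀ k)))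
      (List.ofFn fun i : Fin m => g i.succ) (List.ofFn fun i : Fin m => wv i.succ) := by
    rw [List.forall₂_iff_get]
    refine ⟨by simp, ?_⟩
    intro i h1 h2
    simp only [List.get_ofFn]
    exact hg _
  have h := foldl_spanMon hfa (g 0) (wv 0) 1 (hg 0)
  have e1 : wv 0 + (List.ofFn fun i : Fin m => wv i.succ).sum = ∑ i, wv i := by
    rw [List.sum_ofFn, Fin.sum_univ_succ]
  have e2 : 1 + (List.ofFn fun i : Fin m => g i.succ).length = m + 1 := by simp; omega
  rw [e1, e2] at h
  exact h

lemma eta_single (nv : Fin 1 → ℤ) : eta k nv = 1 := by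
  have h : ∀ i : Fin 1,
      (Finset.univ.filter fun j : Fin 1 => nv j = nv i ∧ j ≤ i) = Finset.univ := by
    intro i
    ext j
    simp [Subsingleton.elim j i]
  rw [eta, Fin.prod_univ_one, h 0]
  simp

lemma fcal_split {c₀ : ℕ} (hc₀ : 0 < c₀) (α₀ : k) (N a : ℕ) (ha : 0 < a)
    (hap : Nat.Coprime a p) :
    Fcal p N₀ k α₀ (a : ℚ) N - (a : k) • DD p N₀ k ⟨a, ha, hap⟩ 0 ∈
      (SpanMon c₀ (wtD c₀ a) 2 : Submodule k (Lq p N₀ k)) := by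
  classical
  have hp1 : 1 < p := (Fact.out : p.Prime).one_lt
  have hpQ : (1 : ℚ) ≤ (p : ℚ) := by exact_mod_cast hp1.le
  have hpQ0 : (0 : ℚ) < (p : ℚ) := by positivity
  set F : (Σ s : ℕ, (Fin s → ℕ) × (Fin s → ℤ)) → Lq p N₀ k := fun x =>
    if hs : 1 ≤ x.1 ∧ x.1 < p then
      if (∀ i, p ∣ x.2.1 i → x.2.1 i = 0) ∧
          x.2.2 ⟨0, hs.1⟩ = 0 ∧
          (∀ i j : Fin x.1, i ≤ j → x.2.2 j ≤ x.2.2 i) ∧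
          (∀ i, -(N : ℤ) ≤ x.2.2 i) ∧
          (∑ i, (x.2.1 i : ℚ) * (p : ℚ) ^ x.2.2 i) = (a : ℚ) then
        (((x.2.1 ⟨0, hs.1⟩ : ℕ) : k) * eta k x.2.2) •
          lieFold (List.ofFn fun i => Dfun p N₀ k α₀ (x.2.1 i) ((x.2.2 i : ℤ) : ZMod N₀))
      else 0
    else 0 with hFdef
  have hFcal : Fcal p N₀ k α₀ (a : ℚ) N = ∑ᶠ x, F x := rfl
  set x₀ : Σ s : ℕ, (Fin s → ℕ) × (Fin s → ℤ) :=
    ⟨1, fun _ => a, fun _ => 0⟩ with hx₀def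
  set B := a * p ^ N with hBdef
  set big : Finset (Σ s : ℕ, (Fin s → ℕ) × (Fin s → ℤ)) :=
    (Finset.range p).sigma fun s =>
      (Fintype.piFinset fun _ : Fin s => Finset.range (B + 1)) ×ˢ
        (Fintype.piFinset fun _ : Fin s => Finset.Icc (-(N : ℤ)) 0) with hbigdef
  -- support is finite
  have hsupp : Function.support F ⊆ ↑big := by
    rintro ⟨s, av, nv⟩ hx
    simp only [Function.mem_support] at hx
    by_cases h1 : 1 ≤ s ∧ s < p
    · rw [hFdef] at hx
      simp only at hx
      rw [dif_pos h1] at hx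
      by_cases h2 : (∀ i, p ∣ av i → av i = 0) ∧
          nv ⟨0, h1.1⟩ = 0 ∧
          (∀ i j : Fin s, i ≤ j → nv j ≤ nv i) ∧
          (∀ i, -(N : ℤ) ≤ nv i) ∧
          (∑ i, (av i : ℚ) * (p : ℚ) ^ nv i) = (a : ℚ)
      swap
      · rw [if_neg h2] at hx; exact absurd rfl hx
      obtain ⟨hz, hn0, hmono, hnN, hsum⟩ := h2
      have hle0 : ∀ i, nv i ≤ 0 := by
        intro i
        have : (⟨0, h1.1⟩ : Fin s) ≤ i := by simp [Fin.le_def]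
        have := hmono _ i this
        omega
      have hbound : ∀ i, av i ≤ B := by
        intro i
        have hterm : ∀ j : Fin s, (0 : ℚ) ≤ (av j : ℚ) * (p : ℚ) ^ nv j := by
          intro j
          have := zpow_pos hpQ0 (nv j)
          positivity
        have hone : (av i : ℚ) * (p : ℚ) ^ nv i ≤ (a : ℚ) := by
          rw [← hsum]
          exact Finset.single_le_sum (fun j _ => hterm j) (Finset.mem_univ i)
        have hppos : (0 : ℚ) < (p : ℚ) ^ nv i :=
          zpow_pos hpQ0 _
        have hcast : (av i : ℚ) ≤ (a : ℚ) * (p : ℚ) ^ (N : ℤ) := by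
          have heq : (av i : ℚ) = ((av i : ℚ) * (p : ℚ) ^ nv i) * (p : ℚ) ^ (-nv i) := by
            rw [mul_assoc, ← zpow_add₀ (ne_of_gt hpQ0), add_neg_cancel, zpow_zero, mul_one]
          rw [heq]
          calc ((av i : ℚ) * (p : ℚ) ^ nv i) * (p : ℚ) ^ (-nv i)
              ≤ (a : ℚ) * (p : ℚ) ^ (-nv i) := by
                apply mul_le_mul_of_nonneg_right hone
                exact (zpow_pos hpQ0 _).le
            _ ≤ (a : ℚ) * (p : ℚ) ^ (N : ℤ) := by
                apply mul_le_mul_of_nonneg_left _ (by positivity)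
                exact zpow_le_zpow_right₀ hpQ (by have := hnN i; omega)
        have h2 : (av i : ℚ) ≤ ((a * p ^ N : ℕ) : ℚ) := by
          push_cast
          rwa [zpow_natCast] at hcast
        exact_mod_cast h2
      simp only [hbigdef, Finset.mem_coe, Finset.mem_sigma, Finset.mem_range,
        Finset.mem_product, Fintype.mem_piFinset, Finset.mem_Icc]
      refine ⟨h1.2, fun i => ?_, fun i => ⟨hnN i, hle0 i⟩⟩
      have := hbound i
      omega
    · rw [hFdef] at hx
      simp only at hx
      rw [dif_neg h1] at hx
      exact absurd rfl hx
  have hfin : (Function.support F).Finite := Set.Finite.subset big.finite_toSet hsupp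
  -- value at x₀
  have hval₀ : F x₀ = (a : k) • DD p N₀ k ⟨a, ha, hap⟩ 0 := by
    rw [hFdef, hx₀def]
    dsimp only
    have h1 : 1 ≤ (1:ℕ) ∧ (1:ℕ) < p := ⟨le_refl 1, by omega⟩
    rw [dif_pos h1, if_pos]
    · rw [eta_single, mul_one]
      congr 1
      simp only [List.ofFn_succ, List.ofFn_zero, lieFold, List.foldl_nil,
        Fin.succ, Int.cast_zero]
      rw [Dfun, dif_pos ⟨ha, hap⟩]
    · refine ⟨fun i hd => absurd hd (not_dvd_of_coprime ha hap), rfl, ?_, ?_, ?_⟩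
      · intro i j _; exact le_refl _
      · intro i; simp
      · simp
  -- all other terms in the span
  have hother : ∀ x, x ≠ x₀ → F x ∈ (SpanMon c₀ (wtD c₀ a) 2 : Submodule k (Lq p N₀ k)) := by
    rintro ⟨s, av, nv⟩ hne
    rw [hFdef]
    simp only
    by_cases h1 : 1 ≤ s ∧ s < p
    swap
    · rw [dif_neg h1]; exact zero_mem _
    rw [dif_pos h1]
    by_cases h2 : (∀ i, p ∣ av i → av i = 0) ∧
        nv ⟨0, h1.1⟩ = 0 ∧
        (∀ i j : Fin s, i ≤ j → nv j ≤ nv i) ∧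
        (∀ i, -(N : ℤ) ≤ nv i) ∧
        (∑ i, (av i : ℚ) * (p : ℚ) ^ nv i) = (a : ℚ)
    swap
    · rw [if_neg h2]; exact zero_mem _
    rw [if_pos h2]
    obtain ⟨hz, hn0, hmono, hnN, hsum⟩ := h2
    have hle0 : ∀ i, nv i ≤ 0 := by
      intro i
      have hle : (⟨0, h1.1⟩ : Fin s) ≤ i := by simp [Fin.le_def]
      have := hmono _ i hle
      omega
    have hs2 : 2 ≤ s := by
      by_contra hcon
      have hs1 : s = 1 := by omega
      subst hs1
      have hnv : nv = fun _ => 0 := by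
        funext i
        rw [Subsingleton.elim i (⟨0, h1.1⟩ : Fin 1)]
        exact hn0
      have hav : av = fun _ => a := by
        funext i
        rw [Subsingleton.elim i (⟨0, h1.1⟩ : Fin 1)]
        have : (av ⟨0, h1.1⟩ : ℚ) = (a : ℚ) := by
          rw [← hsum, hnv]
          simp
        exact_mod_cast this
      exact hne (by rw [hnv, hav])
    -- the monomial bound
    have hsumav : a ≤ ∑ i, av i := by
      have hQ : (a : ℚ) ≤ ∑ i, (av i : ℚ) := by
        rw [← hsum]
        apply Finset.sum_le_sum
        intro i _
        have hone : (p : ℚ) ^ nv i ≤ 1 := zpow_le_one_of_nonpos₀ hpQ (hle0 i)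
        calc (av i : ℚ) * (p : ℚ) ^ nv i ≤ (av i : ℚ) * 1 := by
              apply mul_le_mul_of_nonneg_left hone (by positivity)
          _ = (av i : ℚ) := mul_one _
      have : (a : ℚ) ≤ ((∑ i, av i : ℕ) : ℚ) := by push_cast; exact hQ
      exact_mod_cast this
    have hwt : wtD c₀ a ≤ ∑ i, wtD c₀ (av i) := wtD_sum_le hc₀ h1.1 av hsumav
    apply Submodule.smul_mem
    have hmem := lieFold_ofFn_mem h1.1
      (fun i => Dfun p N₀ k α₀ (av i) ((nv i : ℤ) : ZMod N₀))
      (fun i => wtD c₀ (av i))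
      (fun i => dfun_mem_spanMon α₀ (av i) (hz i) _)
    exact spanMon_mono hwt hs2 hmem
  -- assemble
  have hsub : Function.support F ⊆ ↑(insert x₀ hfin.toFinset) := by
    intro x hx
    simp only [Finset.coe_insert, Set.mem_insert_iff]
    right
    rwa [Set.Finite.coe_toFinset]
  rw [hFcal, finsum_eq_sum_of_support_subset F hsub,
    ← Finset.add_sum_erase _ F (Finset.mem_insert_self x₀ _), hval₀, add_sub_cancel_left]
  apply Submodule.sum_mem
  intro x hx
  exact hother x (Finset.ne_of_mem_erase hx)

section Key

variable {σ : Lq p N₀ k → Lq p N₀ k} {α₀ : k}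
  (hσadd : ∀ x y : Lq p N₀ k, σ (x + y) = σ x + σ y)
  (hσsmul : ∀ (c : k) (x : Lq p N₀ k), σ (c • x) = c ^ p • σ x)
  (hσbrkt : ∀ x y : Lq p N₀ k, σ ⁅x, y⁆ = ⁅σ x, σ y⁆)
  (hσD : ∀ a n, σ (DD p N₀ k a n) = DD p N₀ k a (n + 1))
  (hσ0 : σ (D0 p N₀ k) = D0 p N₀ k)

include hσadd hσsmul hσbrkt hσD hσ0 in
lemma keyRel [CharP k p] [NeZero N₀] {c₀ : ℕ} (hc₀ : 0 < c₀) (N : ℕ)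
    (a : ℕ) (ha : 0 < a) (hap : Nat.Coprime a p) (hca : c₀ ≤ a) (n : ZMod N₀) :
    DD p N₀ k ⟨a, ha, hap⟩ n ∈
      (ramIdeal p N₀ k σ α₀ c₀ N : Submodule k (Lq p N₀ k)) ⊔ SpanMon c₀ (wtD c₀ a) 2 := by
  set J := (ramIdeal p N₀ k σ α₀ c₀ N : Submodule k (Lq p N₀ k)) ⊔
    (SpanMon c₀ (wtD c₀ a) 2 : Submodule k (Lq p N₀ k)) with hJ
  have hfc : Fcal p N₀ k α₀ (a : ℚ) N ∈ ramIdeal p N₀ k σ α₀ c₀ N :=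
    fcal_mem_ramIdeal (by exact_mod_cast hca)
  have hsplit := fcal_split (p := p) (N₀ := N₀) (k := k) (c₀ := c₀) hc₀ α₀ N a ha hap
  have h0 : (a : k) • DD p N₀ k ⟨a, ha, hap⟩ 0 ∈ J := by
    have heq : (a : k) • DD p N₀ k ⟨a, ha, hap⟩ 0 =
        Fcal p N₀ k α₀ (a : ℚ) N -
          (Fcal p N₀ k α₀ (a : ℚ) N - (a : k) • DD p N₀ k ⟨a, ha, hap⟩ 0) := by
      abel
    rw [heq]
    exact sub_mem (Submodule.mem_sup_left ((LieSubmodule.mem_toSubmodule _).2 hfc))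
      (Submodule.mem_sup_right hsplit)
  have hiter : ∀ m : ℕ, (a : k) • DD p N₀ k ⟨a, ha, hap⟩ ((m : ℕ) : ZMod N₀) ∈ J := by
    intro m
    induction m with
    | zero => simpa using h0
    | succ m ih =>
      obtain ⟨u, hu, v, hv, huv⟩ := Submodule.mem_sup.1 ih
      have happ : σ ((a : k) • DD p N₀ k ⟨a, ha, hap⟩ ((m : ℕ) : ZMod N₀)) =
          (a : k) • DD p N₀ k ⟨a, ha, hap⟩ (((m + 1 : ℕ)) : ZMod N₀) := by
        rw [hσsmul, hσD, natCast_pow_p]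
        congr 1
        push_cast
        ring
      have hmem : σ u + σ v ∈ J :=
        add_mem (Submodule.mem_sup_left ((LieSubmodule.mem_toSubmodule _).2
            (sigma_mem_ramIdeal ((LieSubmodule.mem_toSubmodule _).1 hu))))
          (Submodule.mem_sup_right (sigma_spanMon hσadd hσsmul hσbrkt hσD hσ0 hv))
      have heq2 : (a : k) • DD p N₀ k ⟨a, ha, hap⟩ (((m + 1 : ℕ)) : ZMod N₀) = σ u + σ v := by
        rw [← happ, ← huv, hσadd]
      rw [heq2]
      exact hmem
  have hval := hiter n.val
  rw [ZMod.natCast_val, ZMod.cast_id] at hval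
  have hane : (a : k) ≠ 0 := by
    intro h
    exact not_dvd_of_coprime ha hap ((CharP.cast_eq_zero_iff k p a).1 h)
  have hsm := Submodule.smul_mem J ((a : k)⁻¹) hval
  rwa [smul_smul, inv_mul_cancel₀ hane, one_smul] at hsm

include hσadd hσsmul hσbrkt hσD hσ0 in
lemma replace_lemma [CharP k p] [NeZero N₀] {c₀ : ℕ} (hc₀ : 0 < c₀) (N : ℕ)
    {x : Lq p N₀ k} {w ℓ : ℕ} (h : IsMonL c₀ x w ℓ) :
    ℓ < w → x ∈ (ramIdeal p N₀ k σ α₀ c₀ N : Submodule k (Lq p N₀ k)) ⊔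
      SpanMon c₀ w (ℓ + 1) := by
  induction h with
  | gen a n =>
    intro hlt
    obtain ⟨b, hb0, hbp⟩ := a
    have h1 : 1 < wtD c₀ b := hlt
    have hca : c₀ ≤ b := by
      rw [wtD] at h1
      have h2 : 1 ≤ b / c₀ := by omega
      have := (Nat.le_div_iff_mul_le hc₀).1 h2
      omega
    exact keyRel hσadd hσsmul hσbrkt hσD hσ0 hc₀ N b hb0 hbp hca n
  | zero => intro hlt; omega
  | brkt hx hy ihx ihy =>
    rename_i x y w₁ w₂ ℓ₁ ℓ₂
    intro hlt
    rcases lt_or_ge ℓ₁ w₁ with hcase | hcase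
    · obtain ⟨u, hu, v, hv, huv⟩ := Submodule.mem_sup.1 (ihx hcase)
      rw [← huv, lq_add_lie]
      refine add_mem (Submodule.mem_sup_left ?_) (Submodule.mem_sup_right ?_)
      · exact (LieSubmodule.mem_toSubmodule _).2
          (lie_mem_left k (Lq p N₀ k) _ u y ((LieSubmodule.mem_toSubmodule _).1 hu))
      · have hlie := lie_spanMon hv (mem_spanMon_of_isMonL hy le_rfl le_rfl)
        exact spanMon_mono le_rfl (by omega) hlie
    · have hcase2 : ℓ₂ < w₂ := by
        have h1 := (isMonL_le c₀ hx).2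
        omega
      obtain ⟨u, hu, v, hv, huv⟩ := Submodule.mem_sup.1 (ihy hcase2)
      rw [← huv, lq_lie_add]
      refine add_mem (Submodule.mem_sup_left ?_) (Submodule.mem_sup_right ?_)
      · exact (LieSubmodule.mem_toSubmodule _).2
          (lie_mem_right k (Lq p N₀ k) _ x u ((LieSubmodule.mem_toSubmodule _).1 hu))
      · have hlie := lie_spanMon (mem_spanMon_of_isMonL hx le_rfl le_rfl) hv
        exact spanMon_mono le_rfl (by omega) hlie

include hσadd hσsmul hσbrkt hσD hσ0 in
lemma master_lemma [CharP k p] [NeZero N₀] {c₀ : ℕ} (hc₀ : 0 < c₀) (N : ℕ) :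
    ∀ (d : ℕ) {x : Lq p N₀ k} {w ℓ : ℕ}, IsMonL c₀ x w ℓ → p ≤ w → p ≤ ℓ + d →
      x ∈ ramIdeal p N₀ k σ α₀ c₀ N := by
  intro d
  induction d with
  | zero =>
    intro x w ℓ h hw hl
    rw [isMonL_zero_of_long h (by omega)]
    exact zero_mem _
  | succ d ih =>
    intro x w ℓ h hw hl
    by_cases hp : p ≤ ℓ
    · rw [isMonL_zero_of_long h hp]
      exact zero_mem _
    · have hlt : ℓ < w := by omega
      obtain ⟨u, hu, v, hv, huv⟩ := Submodule.mem_sup.1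
        (replace_lemma hσadd hσsmul hσbrkt hσD hσ0 hc₀ N h hlt)
      have hvI : v ∈ ramIdeal p N₀ k σ α₀ c₀ N := by
        have hle : (SpanMon c₀ w (ℓ + 1) : Submodule k (Lq p N₀ k)) ≤
            (ramIdeal p N₀ k σ α₀ c₀ N : Submodule k (Lq p N₀ k)) := by
          rw [SpanMon, Submodule.span_le]
          rintro y ⟨w', ℓ', hw', hl', hy⟩
          exact (LieSubmodule.mem_toSubmodule _).2 (ih hy (by omega) (by omega))
        exact (LieSubmodule.mem_toSubmodule _).1 (hle hv)
      rw [← huv]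
      exact add_mem ((LieSubmodule.mem_toSubmodule _).1 hu) hvI

end Key

end Aux

/-- **Proposition 4.3** (`𝓛(p) ⊆ 𝓛^{(c₀)}`).  There is `N₁` such that for all `N ≥ N₁` the
weight-`p` part `L_k(p)` of the filtration is contained in the ideal `I_N(c₀)` generated by
the elements `ℱ⁰_{γ,−N}` with `γ ≥ c₀`. -/
theorem stmt_10 (p N₀ : ℕ) [Fact p.Prime] (hp : 2 < p) (hN₀ : 0 < N₀)
    (k : Type*) [Field k] [Fintype k] [Algebra (ZMod p) k]
    (hcard : Fintype.card k = p ^ N₀)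
    (α₀ : k) (htr : Algebra.trace (ZMod p) k α₀ = 1)
    (σ : Lq p N₀ k → Lq p N₀ k)
    (hσadd : ∀ x y : Lq p N₀ k, σ (x + y) = σ x + σ y)
    (hσsmul : ∀ (c : k) (x : Lq p N₀ k), σ (c • x) = c ^ p • σ x)
    (hσbrkt : ∀ x y : Lq p N₀ k, σ ⁅x, y⁆ = ⁅σ x, σ y⁆)
    (hσD : ∀ a n, σ (DD p N₀ k a n) = DD p N₀ k a (n + 1))
    (hσ0 : σ (D0 p N₀ k) = D0 p N₀ k)
    (c₀ : ℕ) (hc₀ : 0 < c₀) (hpc₀ : p ∣ c₀) :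
    ∃ N₁ : ℕ, ∀ N : ℕ, N₁ ≤ N →
      ∀ x : Lq p N₀ k, x ∈ Lk p N₀ k c₀ p → x ∈ ramIdeal p N₀ k σ α₀ c₀ N := by
  haveI : CharP k p := charP_of_injective_algebraMap (algebraMap (ZMod p) k).injective p
  haveI : NeZero N₀ := ⟨hN₀.ne'⟩
  refine ⟨0, fun N _ x hx => ?_⟩
  have hle : Lk p N₀ k c₀ p ≤ (ramIdeal p N₀ k σ α₀ c₀ N : Submodule k (Lq p N₀ k)) := by
    rw [Lk, Submodule.span_le]
    rintro y ⟨w, hw, hmon⟩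
    obtain ⟨ℓ, hℓ⟩ := isMon_isMonL c₀ hmon
    exact (LieSubmodule.mem_toSubmodule _).2
      (master_lemma hσadd hσsmul hσbrkt hσD hσ0 hc₀ N p hℓ hw (by omega))
  exact (LieSubmodule.mem_toSubmodule _).1 (hle hx)

end AbrLie
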